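/- Let λ > 0, r ≠ λ, let d ∈ ℝ satisfy d² = r²(r−λ)² + 4, let V ∈ ℝ satisfy V² = (r/2)(−r + d/(r−λ)), and let ε = ±1. At the point ξ_ε(r,λ) the first integrals take the values L = −ε·½[λ(r−λ)+d]·V, H = −½r(r−λ) + (2r−λ)d/(2(r−λ)), and K = (λ/(4(r−λ)²))·[r(r−λ)−d]·[r(r−λ)(4r−3λ) − λd]. -/

import Mathlib

/-- The energy integral H. -/
noncomputable def KYH (v : Fin 6 → ℝ) : ℝ :=
  (v 0)^2 + (v 1)^2 + (1/2)*(v 2)^2 - v 3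

/-- The area integral L. -/
noncomputable def KYL (lam : ℝ) (v : Fin 6 → ℝ) : ℝ :=
  v 0 * v 3 + v 1 * v 4 + (1/2)*(v 2 + lam)*(v 5)

/-- The Kowalevski–Yehia integral K. -/
noncomputable def KYK (lam : ℝ) (v : Fin 6 → ℝ) : ℝ :=
  ((v 0)^2 - (v 1)^2 + v 3)^2 + (2*(v 0)*(v 1) + v 4)^2
    + 2*lam*((v 2 - lam)*((v 0)^2 + (v 1)^2) + 2*(v 0)*(v 5))

/-- values of the first integrals L, H, K at the relative
equilibrium ξ_ε(r,λ). -/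
theorem first_integral_values_at_relative_equilibria
    (lam r d V ε : ℝ)
    (hlam : 0 < lam) (hr : r ≠ lam)
    (hd : d^2 = r^2*(r - lam)^2 + 4)
    (hV : V^2 = (r/2)*(-r + d/(r - lam)))
    (hε : ε = 1 ∨ ε = -1)
    (ξ : Fin 6 → ℝ)
    (hξ : ξ = ![ε*V, 0, r, (1/2)*(r*(r - lam) - d), 0, -ε*(r - lam)*V]) :
    KYL lam ξ = -ε * ((1/2)*(lam*(r - lam) + d)) * V ∧
    KYH ξ = -(1/2)*r*(r - lam) + (2*r - lam)*d/(2*(r - lam)) ∧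
    KYK lam ξ = (lam/(4*(r - lam)^2)) * (r*(r - lam) - d)
        * (r*(r - lam)*(4*r - 3*lam) - lam*d) := by
  have hsub : r - lam ≠ 0 := sub_ne_zero.mpr hr
  subst hξ
  simp only [KYH, KYL, KYK, Matrix.cons_val_zero, Matrix.cons_val_one, Matrix.head_cons,
    Matrix.cons_val_two, Matrix.tail_cons, Matrix.cons_val_three, Matrix.cons_val_four,
    Matrix.cons_val_fin_one]
  have h5 : (![ε*V, 0, r, (1/2)*(r*(r - lam) - d), 0, -ε*(r - lam)*V] : Fin 6 → ℝ) 5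
      = -ε*(r - lam)*V := rfl
  rw [h5]
  field_simp at hV ⊢
  rcases hε with h | h <;> subst h <;>
    refine ⟨by ring, by linear_combination hV, by
      linear_combination (8*lam*d - 16*lam^3 - 4*r*d + 40*r*lam^2 - 28*r^2*lam + 4*r^3
        - 8*V^2*lam + 8*V^2*r) * hV⟩
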